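/- For every real number α with 2/3 < α < 1, the function b(α) = (1+√2)^α · (α/(1−α))^(1−α) · (α/(2α−1))^(2α−1) satisfies b(α) ≤ 3.18. -/

import Mathlib

open Real in
/-- For every real `α` with `2/3 < α < 1`, the function
`b(α) = (1+√2)^α · (α/(1−α))^(1−α) · (α/(2α−1))^(2α−1)` satisfies
`b(α) ≤ 3.18`. -/
theorem b_le_318 (α : ℝ) (h₁ : 2 / 3 < α) (h₂ : α < 1) :
    (1 + Real.sqrt 2) ^ α * (α / (1 - α)) ^ (1 - α) * (α / (2 * α - 1)) ^ (2 * α - 1)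
      ≤ 3.18 := by
  have hα0 : (0:ℝ) < α := by linarith
  have h1α : (0:ℝ) < 1 - α := by linarith
  have h2α : (0:ℝ) < 2 * α - 1 := by linarith
  set t : ℝ := 0.2393 with ht
  have ht0 : (0:ℝ) < t := by norm_num [ht]
  have h1t : (0:ℝ) < 1 - t := by norm_num [ht]
  -- weighted AM-GM with weights (1-α)/α, (2α-1)/α
  have hw : (1 - α) / α + (2 * α - 1) / α = 1 := by field_simp; ring
  have hgm := Real.geom_mean_le_arith_mean2_weighted
    (div_nonneg h1α.le hα0.le) (div_nonneg h2α.le hα0.le)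
    (le_of_lt (by positivity : (0:ℝ) < t * α / (1 - α)))
    (le_of_lt (by positivity : (0:ℝ) < (1 - t) * α / (2 * α - 1))) hw
  have harith : (1 - α) / α * (t * α / (1 - α)) + (2 * α - 1) / α * ((1 - t) * α / (2 * α - 1)) = 1 := by
    rw [div_mul_div_comm, div_mul_div_comm, div_add_div _ _ (by positivity) (by positivity), div_eq_one_iff_eq (by positivity)]
    ring
  rw [harith] at hgm
  -- raise the geometric mean inequality to the power α
  have hkey : (t * α / (1 - α)) ^ (1 - α) * ((1 - t) * α / (2 * α - 1)) ^ (2 * α - 1) ≤ 1 := by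
    have h := Real.rpow_le_one (by positivity) hgm hα0.le
    rw [Real.mul_rpow (by positivity) (by positivity),
      ← Real.rpow_mul (by positivity), ← Real.rpow_mul (by positivity)] at h
    have e1 : (1 - α) / α * α = 1 - α := by field_simp
    have e2 : (2 * α - 1) / α * α = 2 * α - 1 := by field_simp
    rwa [e1, e2] at h
  -- split off the t-factors
  have hsplit : (t * α / (1 - α)) ^ (1 - α) * ((1 - t) * α / (2 * α - 1)) ^ (2 * α - 1)
      = (t ^ (1 - α) * (1 - t) ^ (2 * α - 1)) *
        ((α / (1 - α)) ^ (1 - α) * (α / (2 * α - 1)) ^ (2 * α - 1)) := by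
    rw [show t * α / (1 - α) = t * (α / (1 - α)) by ring,
      show (1 - t) * α / (2 * α - 1) = (1 - t) * (α / (2 * α - 1)) by ring,
      Real.mul_rpow ht0.le (by positivity), Real.mul_rpow h1t.le (by positivity)]
    ring
  rw [hsplit] at hkey
  have hden : (0:ℝ) < t ^ (1 - α) * (1 - t) ^ (2 * α - 1) := by
    have := Real.rpow_pos_of_pos ht0 (1 - α)
    have := Real.rpow_pos_of_pos h1t (2 * α - 1)
    positivity
  have hAB : (α / (1 - α)) ^ (1 - α) * (α / (2 * α - 1)) ^ (2 * α - 1)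
      ≤ 1 / (t ^ (1 - α) * (1 - t) ^ (2 * α - 1)) := by
    rw [le_div_iff₀ hden]
    linarith [hkey]
  -- bound on 1 + √2
  have hsqrt : Real.sqrt 2 ≤ 1.4143 := by
    have h := Real.sqrt_le_sqrt (show (2:ℝ) ≤ 1.4143 ^ 2 by norm_num)
    rwa [Real.sqrt_sq (by norm_num)] at h
  have hbase : (0:ℝ) < 1 + Real.sqrt 2 := by positivity
  have hpow : (1 + Real.sqrt 2) ^ α ≤ ((1 - t) ^ 2 / t) ^ α := by
    apply Real.rpow_le_rpow hbase.le _ hα0.le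
    rw [le_div_iff₀ ht0, ht]
    nlinarith [hsqrt]
  -- the combined constant equals (1-t)/t
  have e1 : ((1 - t) ^ 2 / t) ^ α = (1 - t) ^ (2 * α) * t ^ (-α) := by
    rw [Real.div_rpow (by positivity) ht0.le, Real.rpow_neg ht0.le, div_eq_mul_inv,
      ← Real.rpow_natCast (1 - t) 2, ← Real.rpow_mul h1t.le]
    norm_num
  have e2 : 1 / (t ^ (1 - α) * (1 - t) ^ (2 * α - 1))
      = t ^ (-(1 - α)) * (1 - t) ^ (-(2 * α - 1)) := by
    rw [Real.rpow_neg ht0.le, Real.rpow_neg h1t.le, one_div, mul_inv]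
  have hfinal : ((1 - t) ^ 2 / t) ^ α * (1 / (t ^ (1 - α) * (1 - t) ^ (2 * α - 1)))
      = (1 - t) / t := by
    calc ((1 - t) ^ 2 / t) ^ α * (1 / (t ^ (1 - α) * (1 - t) ^ (2 * α - 1)))
        = ((1 - t) ^ (2 * α) * (1 - t) ^ (-(2 * α - 1))) * (t ^ (-α) * t ^ (-(1 - α))) := by
          rw [e1, e2]; ring
      _ = (1 - t) ^ (2 * α + -(2 * α - 1)) * t ^ (-α + -(1 - α)) := by
          rw [Real.rpow_add h1t, Real.rpow_add ht0]
      _ = (1 - t) * t ^ (-(1:ℝ)) := by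
          rw [show 2 * α + -(2 * α - 1) = (1:ℝ) by ring, show -α + -(1 - α) = -(1:ℝ) by ring,
            Real.rpow_one]
      _ = (1 - t) / t := by rw [Real.rpow_neg_one]; ring
  -- chain everything together
  have hchain : (1 + Real.sqrt 2) ^ α * (α / (1 - α)) ^ (1 - α) * (α / (2 * α - 1)) ^ (2 * α - 1)
      ≤ (1 - t) / t := by
    rw [mul_assoc]
    calc (1 + Real.sqrt 2) ^ α * ((α / (1 - α)) ^ (1 - α) * (α / (2 * α - 1)) ^ (2 * α - 1))
        ≤ (1 + Real.sqrt 2) ^ α * (1 / (t ^ (1 - α) * (1 - t) ^ (2 * α - 1))) := by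
          apply mul_le_mul_of_nonneg_left hAB (Real.rpow_nonneg hbase.le α)
      _ ≤ ((1 - t) ^ 2 / t) ^ α * (1 / (t ^ (1 - α) * (1 - t) ^ (2 * α - 1))) := by
          apply mul_le_mul_of_nonneg_right hpow (by positivity)
      _ = (1 - t) / t := hfinal
  calc (1 + Real.sqrt 2) ^ α * (α / (1 - α)) ^ (1 - α) * (α / (2 * α - 1)) ^ (2 * α - 1)
      ≤ (1 - t) / t := hchain
    _ ≤ 3.18 := by norm_num [ht]
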